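/- Let F be a field of characteristic zero, p a prime, and b_1, …, b_t positive integers. Then there exist a positive integer N and nonnegative integers c_1, …, c_N such that the group algebra F[Z/p^{b_1}Z × ⋯ × Z/p^{b_t}Z] is isomorphic as an F-algebra to the product F[z]/⟨Φ_{p^{c_1}}(z)⟩ × ⋯ × F[z]/⟨Φ_{p^{c_N}}(z)⟩. -/

import Mathlib

open Polynomial
open Polynomial

noncomputable section

namespace St16

/-- CRT as an `AlgEquiv`. -/
def crtAlgEquiv {F A : Type*} [CommSemiring F] [CommRing A] [Algebra F A]
    {ι : Type*} [Fintype ι] (f : ι → A) (hf : Pairwise (Function.onFun IsCoprime f)) :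
    (A ⧸ Ideal.span {∏ i, f i}) ≃ₐ[F] Π i, A ⧸ Ideal.span ({f i} : Set A) := by
  have hspan : Ideal.span {∏ i, f i} = ⨅ i, Ideal.span ({f i} : Set A) :=
    (Ideal.iInf_span_singleton (fun i j hij => hf hij)).symm
  have hco : Pairwise (Function.onFun IsCoprime fun i => Ideal.span ({f i} : Set A)) := fun i j hij =>
    (Ideal.isCoprime_span_singleton_iff _ _).mpr (hf hij)
  exact AlgEquiv.ofRingEquiv (f :=
      (Ideal.quotEquivOfEq hspan).trans (Ideal.quotientInfRingEquivPiQuotient _ hco))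
    (fun x => by
      ext i
      rfl)

/-- `Equiv.piCurry` as an `AlgEquiv`. -/
def piCurryAlgEquiv {F : Type*} [CommSemiring F] {ι : Type*} {κ : ι → Type*}
    (A : ∀ i, κ i → Type*) [∀ i k, Semiring (A i k)] [∀ i k, Algebra F (A i k)] :
    (Π s : Σ i, κ i, A s.1 s.2) ≃ₐ[F] Π i, Π k, A i k where
  toEquiv := Equiv.piCurry A
  map_mul' _ _ := rfl
  map_add' _ _ := rfl
  commutes' _ := rfl

/-- `Equiv.piCongrLeft'` as an `AlgEquiv`. -/
def piCongrLeft'AlgEquiv {F : Type*} [CommSemiring F] {ι κ : Type*}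
    (A : ι → Type*) [∀ i, Semiring (A i)] [∀ i, Algebra F (A i)] (e : ι ≃ κ) :
    (Π i, A i) ≃ₐ[F] Π k, A (e.symm k) where
  toEquiv := Equiv.piCongrLeft' A e
  map_mul' _ _ := rfl
  map_add' _ _ := rfl
  commutes' _ := rfl

/-- a single-factor product. -/
def funUniqueAlgEquiv (F A : Type*) [CommSemiring F] [Semiring A] [Algebra F A]
    (ι : Type*) [Unique ι] : A ≃ₐ[F] (ι → A) where
  toEquiv := (Equiv.funUnique ι A).symm
  map_mul' _ _ := rfl
  map_add' _ _ := rfl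
  commutes' _ := rfl

end St16

open Polynomial AddMonoidAlgebra

noncomputable section
namespace St16

variable {B : Type*} [CommRing B]

theorem pow_mod_eq {A : Type*} [Monoid A] {r : A} {n : ℕ} (hr : r ^ n = 1) (m : ℕ) :
    r ^ (m % n) = r ^ m := by
  conv_rhs => rw [← Nat.mod_add_div m n]
  rw [pow_add, pow_mul, hr, one_pow, mul_one]

theorem root_pow_self (n : ℕ) :
    (AdjoinRoot.root ((X : B[X]) ^ n - 1)) ^ n = 1 := by
  have h := AdjoinRoot.mk_self (f := (X : B[X]) ^ n - 1)
  rw [map_sub, map_pow, map_one, sub_eq_zero] at h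
  exact h

/-- `B[ZMod n] ≃ₐ[B] B[X]/(X^n - 1)`. -/
def zmodAlgEquiv (n : ℕ) [NeZero n] :
    AddMonoidAlgebra B (ZMod n) ≃ₐ[B] AdjoinRoot ((X : B[X]) ^ n - 1) := by
  set r := AdjoinRoot.root ((X : B[X]) ^ n - 1) with hrdef
  have hr : r ^ n = 1 := root_pow_self n
  refine AlgEquiv.ofAlgHom
    (AddMonoidAlgebra.lift B _ (ZMod n)
      { toFun := fun x => r ^ (Multiplicative.toAdd x).val
        map_one' := by simp
        map_mul' := fun x y => by
          show r ^ ((Multiplicative.toAdd x) + (Multiplicative.toAdd y)).val =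
            r ^ (Multiplicative.toAdd x).val * r ^ (Multiplicative.toAdd y).val
          rw [ZMod.val_add, pow_mod_eq hr, pow_add] })
    (AdjoinRoot.liftAlgHom _ (Algebra.ofId B _) (AddMonoidAlgebra.single (1 : ZMod n) (1 : B)) ?_) ?_ ?_
  · show aeval _ _ = _
    rw [map_sub, map_one, aeval_X_pow, AddMonoidAlgebra.single_pow, one_pow, sub_eq_zero]
    have : n • (1 : ZMod n) = 0 := by
      simp [nsmul_eq_mul]
    rw [this]
    rfl
  · apply AdjoinRoot.algHom_ext
    rw [AlgHom.comp_apply, AdjoinRoot.liftAlgHom_root, AddMonoidAlgebra.lift_single, one_smul]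
    show r ^ (1 : ZMod n).val = r
    rw [ZMod.val_one_eq_one_mod, pow_mod_eq hr, pow_one]
  · refine AddMonoidAlgebra.algHom_ext ?_ (Subsingleton.elim _ _)
    intro x
    rw [AlgHom.comp_apply, AddMonoidAlgebra.lift_single, one_smul]
    show (AdjoinRoot.liftAlgHom _ _ _ _) (r ^ (Multiplicative.toAdd (Multiplicative.ofAdd x)).val)
      = AddMonoidAlgebra.single x 1
    rw [map_pow, AdjoinRoot.liftAlgHom_root, AddMonoidAlgebra.single_pow, one_pow]
    congr 1
    show x.val • (1 : ZMod n) = x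
    rw [nsmul_eq_mul, mul_one, ZMod.natCast_val, ZMod.cast_id]

end St16


open Polynomial AddMonoidAlgebra Multiplicative

noncomputable section
namespace St16

section e3
variable {F S T : Type*} [CommSemiring F] [CommRing S] [CommRing T]
  [Algebra F S] [Algebra F T] {G : Type*} [AddCommMonoid G]

def mapCoeffHom (e : S →+* T) : AddMonoidAlgebra S G →+* AddMonoidAlgebra T G :=
  AddMonoidAlgebra.liftNCRingHom (AddMonoidAlgebra.singleZeroRingHom.comp e)
    (AddMonoidAlgebra.of T G) (fun _ _ => Commute.all _ _)

theorem mapCoeffHom_single (e : S →+* T) (a : G) (b : S) :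
    mapCoeffHom e (AddMonoidAlgebra.single a b) = AddMonoidAlgebra.single a (e b) := by
  show AddMonoidAlgebra.liftNC _ _ _ = _
  rw [AddMonoidAlgebra.liftNC_single]
  show AddMonoidAlgebra.single 0 (e b) * AddMonoidAlgebra.single a 1 = _
  rw [AddMonoidAlgebra.single_mul_single, zero_add, mul_one]

def mapCoeffAlgHom (e : S →ₐ[F] T) :
    AddMonoidAlgebra S G →ₐ[F] AddMonoidAlgebra T G where
  toRingHom := mapCoeffHom e.toRingHom
  commutes' := fun z => by
    rw [AddMonoidAlgebra.coe_algebraMap, Function.comp_apply,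
      AddMonoidAlgebra.coe_algebraMap, Function.comp_apply]
    show mapCoeffHom e.toRingHom (AddMonoidAlgebra.single 0 _) = _
    rw [mapCoeffHom_single]
    congr 1
    exact e.commutes z

theorem mapCoeffAlgHom_single (e : S →ₐ[F] T) (a : G) (b : S) :
    mapCoeffAlgHom e (AddMonoidAlgebra.single a b) = AddMonoidAlgebra.single a (e b) :=
  mapCoeffHom_single e.toRingHom a b

theorem mapCoeff_comp_aux {U V : Type*} [CommRing U] [CommRing V] [Algebra F U]
    [Algebra F V] (u : U ≃ₐ[F] V) :
      ((mapCoeffAlgHom (G := G) u.toAlgHom).comp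
        (mapCoeffAlgHom u.symm.toAlgHom)).toRingHom = (AlgHom.id F _).toRingHom := by
  apply AddMonoidAlgebra.ringHom_ext
  · intro b
    show mapCoeffAlgHom u.toAlgHom (mapCoeffAlgHom u.symm.toAlgHom
      (AddMonoidAlgebra.single 0 b)) = AddMonoidAlgebra.single 0 b
    rw [mapCoeffAlgHom_single, mapCoeffAlgHom_single]
    congr 1
    exact u.apply_symm_apply b
  · intro a
    show mapCoeffAlgHom u.toAlgHom (mapCoeffAlgHom u.symm.toAlgHom
      (AddMonoidAlgebra.single a 1)) = AddMonoidAlgebra.single a 1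
    rw [mapCoeffAlgHom_single, mapCoeffAlgHom_single, map_one, map_one]

/-- Transport an `AlgEquiv` of coefficient rings to monoid algebras. -/
def mapCoeffAlgEquiv (e : S ≃ₐ[F] T) :
    AddMonoidAlgebra S G ≃ₐ[F] AddMonoidAlgebra T G :=
  AlgEquiv.ofAlgHom (mapCoeffAlgHom e.toAlgHom) (mapCoeffAlgHom e.symm.toAlgHom)
    (AlgHom.ext fun x => RingHom.congr_fun (mapCoeff_comp_aux e) x)
    (AlgHom.ext fun x => RingHom.congr_fun (mapCoeff_comp_aux e.symm) x)

end e3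

section e2
variable (B : Type*) [CommRing B] (M N : Type*) [AddCommMonoid M] [AddCommMonoid N]

def prodFwd : AddMonoidAlgebra B (M × N) →+*
    AddMonoidAlgebra (AddMonoidAlgebra B N) M :=
  AddMonoidAlgebra.liftNCRingHom
    (AddMonoidAlgebra.singleZeroRingHom.comp AddMonoidAlgebra.singleZeroRingHom)
    { toFun := fun x => AddMonoidAlgebra.single (toAdd x).1
        (AddMonoidAlgebra.single (toAdd x).2 1)
      map_one' := rfl
      map_mul' := fun x y => by
        show _ = AddMonoidAlgebra.single (toAdd x).1 (AddMonoidAlgebra.single (toAdd x).2 1) *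
          AddMonoidAlgebra.single (toAdd y).1 (AddMonoidAlgebra.single (toAdd y).2 1)
        rw [AddMonoidAlgebra.single_mul_single, AddMonoidAlgebra.single_mul_single, mul_one]
        rfl }
    (fun _ _ => Commute.all _ _)

variable {B M N}

theorem prodFwd_single (m : M) (n : N) (b : B) :
    prodFwd B M N (AddMonoidAlgebra.single ((m, n) : M × N) b) =
      AddMonoidAlgebra.single m (AddMonoidAlgebra.single n b) := by
  show AddMonoidAlgebra.liftNC _ _ _ = _
  rw [AddMonoidAlgebra.liftNC_single]
  show AddMonoidAlgebra.single 0 (AddMonoidAlgebra.single 0 b) *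
    AddMonoidAlgebra.single m (AddMonoidAlgebra.single n 1) = _
  rw [AddMonoidAlgebra.single_mul_single, zero_add, AddMonoidAlgebra.single_mul_single,
    zero_add, mul_one]

variable (B M N)

def prodBwd : AddMonoidAlgebra (AddMonoidAlgebra B N) M →+*
    AddMonoidAlgebra B (M × N) :=
  AddMonoidAlgebra.liftNCRingHom
    (AddMonoidAlgebra.mapDomainRingHom B (AddMonoidHom.inr M N))
    { toFun := fun x => AddMonoidAlgebra.single ((toAdd x, 0) : M × N) 1
      map_one' := rfl
      map_mul' := fun x y => by
        show _ = AddMonoidAlgebra.single ((toAdd x, 0) : M × N) 1 *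
          AddMonoidAlgebra.single ((toAdd y, 0) : M × N) 1
        rw [AddMonoidAlgebra.single_mul_single, mul_one, Prod.mk_add_mk, add_zero]
        rfl }
    (fun _ _ => Commute.all _ _)

variable {B M N}

theorem prodBwd_single_single (m : M) (n : N) (b : B) :
    prodBwd B M N (AddMonoidAlgebra.single m (AddMonoidAlgebra.single n b)) =
      AddMonoidAlgebra.single ((m, n) : M × N) b := by
  show AddMonoidAlgebra.liftNC _ _ _ = _
  rw [AddMonoidAlgebra.liftNC_single]
  show (AddMonoidAlgebra.mapDomainRingHom B (AddMonoidHom.inr M N))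
      (AddMonoidAlgebra.single n b) * AddMonoidAlgebra.single ((m, 0) : M × N) 1 = _
  have : (AddMonoidAlgebra.mapDomainRingHom B (AddMonoidHom.inr M N))
      (AddMonoidAlgebra.single n b) = AddMonoidAlgebra.single ((0, n) : M × N) b := by
    show AddMonoidAlgebra.mapDomain _ _ = _
    rw [AddMonoidAlgebra.mapDomain_single]
    rfl
  rw [this, AddMonoidAlgebra.single_mul_single, mul_one, Prod.mk_add_mk, zero_add, add_zero]

variable (F : Type*) [CommSemiring F] [Algebra F B] (B M N)

/-- `B[M × N] ≃ B[N][M]` as `F`-algebras. -/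
def prodAlgEquiv : AddMonoidAlgebra B (M × N) ≃ₐ[F]
    AddMonoidAlgebra (AddMonoidAlgebra B N) M := by
  have h1 : (prodFwd B M N).comp (prodBwd B M N) = RingHom.id _ := by
    apply AddMonoidAlgebra.ringHom_ext
    · intro s
      have key : ((prodFwd B M N).comp ((prodBwd B M N).comp
          (AddMonoidAlgebra.singleZeroRingHom))) =
          (AddMonoidAlgebra.singleZeroRingHom :
            AddMonoidAlgebra B N →+* AddMonoidAlgebra (AddMonoidAlgebra B N) M) := by
        apply AddMonoidAlgebra.ringHom_ext
        · intro b
          show prodFwd B M N (prodBwd B M N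
            (AddMonoidAlgebra.single 0 (AddMonoidAlgebra.single 0 b))) = _
          rw [prodBwd_single_single, prodFwd_single]
          rfl
        · intro n
          show prodFwd B M N (prodBwd B M N
            (AddMonoidAlgebra.single 0 (AddMonoidAlgebra.single n 1))) = _
          rw [prodBwd_single_single, prodFwd_single]
          rfl
      exact RingHom.congr_fun key s
    · intro m
      show prodFwd B M N (prodBwd B M N (AddMonoidAlgebra.single m 1)) = _
      rw [show (1 : AddMonoidAlgebra B N) = AddMonoidAlgebra.single 0 1 from rfl,
        prodBwd_single_single, prodFwd_single]
      rfl
  have h2 : (prodBwd B M N).comp (prodFwd B M N) = RingHom.id _ := by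
    apply AddMonoidAlgebra.ringHom_ext
    · intro b
      show prodBwd B M N (prodFwd B M N
        (AddMonoidAlgebra.single ((0 : M), (0 : N)) b)) = _
      rw [prodFwd_single, prodBwd_single_single]
      rfl
    · intro a
      show prodBwd B M N (prodFwd B M N
        (AddMonoidAlgebra.single ((a.1, a.2) : M × N) 1)) = _
      rw [prodFwd_single, prodBwd_single_single]
      rfl
  refine AlgEquiv.ofAlgHom ⟨prodFwd B M N, fun z => ?_⟩ ⟨prodBwd B M N, fun z => ?_⟩
    (AlgHom.ext fun x => RingHom.congr_fun h1 x)
    (AlgHom.ext fun x => RingHom.congr_fun h2 x)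
  · rw [AddMonoidAlgebra.coe_algebraMap, Function.comp_apply]
    show prodFwd B M N (AddMonoidAlgebra.single ((0 : M), (0 : N)) _) = _
    rw [prodFwd_single]
    rfl
  · rw [AddMonoidAlgebra.coe_algebraMap, Function.comp_apply]
    show prodBwd B M N (AddMonoidAlgebra.single (0 : M)
      (AddMonoidAlgebra.single (0 : N) _)) = _
    rw [prodBwd_single_single]
    rfl

end e2
end St16


open Polynomial AddMonoidAlgebra Multiplicative

noncomputable section
namespace St16

section e4
variable {F : Type*} [CommSemiring F] {ι : Type*} [Fintype ι] {S : ι → Type*}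
  [∀ i, CommRing (S i)] [∀ i, Algebra F (S i)] {G : Type*} [AddCommMonoid G]

def piFwd (S : ι → Type*) [∀ i, CommRing (S i)] (G : Type*) [AddCommMonoid G] :
    AddMonoidAlgebra (Π i, S i) G →+* Π i, AddMonoidAlgebra (S i) G :=
  Pi.ringHom fun i => AddMonoidAlgebra.liftNCRingHom
    (AddMonoidAlgebra.singleZeroRingHom.comp (Pi.evalRingHom S i))
    (AddMonoidAlgebra.of (S i) G) (fun _ _ => Commute.all _ _)

theorem piFwd_single (a : G) (b : Π i, S i) (i : ι) :
    piFwd S G (AddMonoidAlgebra.single a b) i = AddMonoidAlgebra.single a (b i) := by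
  show AddMonoidAlgebra.liftNC _ _ _ = _
  rw [AddMonoidAlgebra.liftNC_single]
  show AddMonoidAlgebra.single 0 (b i) * AddMonoidAlgebra.single a 1 = _
  rw [AddMonoidAlgebra.single_mul_single, zero_add, mul_one]

theorem piFwd_apply (f : AddMonoidAlgebra (Π i, S i) G) (i : ι) (a : G) :
    (piFwd S G f i).coeff a = f.coeff a i := by
  classical
  obtain ⟨f⟩ := f
  induction f using Finsupp.induction with
  | zero => simp
  | single_add a' b f _ _ ih =>
    show (piFwd S G (AddMonoidAlgebra.single a' b + AddMonoidAlgebra.ofCoeff f) i).coeff a =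
      (Finsupp.single a' b + f) a i
    rw [map_add]
    have h1 : ((piFwd S G (AddMonoidAlgebra.single a' b) +
        piFwd S G (AddMonoidAlgebra.ofCoeff f)) i).coeff a =
        (piFwd S G (AddMonoidAlgebra.single a' b) i).coeff a +
          (piFwd S G (AddMonoidAlgebra.ofCoeff f) i).coeff a := rfl
    rw [h1, ih, piFwd_single]
    rw [AddMonoidAlgebra.coeff_single, Finsupp.add_apply, Finsupp.single_apply, Finsupp.single_apply]
    by_cases h : a' = a
    · subst h; simp
    · simp [h]

theorem piFwd_bijective : Function.Bijective (piFwd S G) := by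
  constructor
  · intro f g h
    ext a i
    rw [← piFwd_apply, ← piFwd_apply, h]
  · intro v
    classical
    set A : Finset G := Finset.univ.sup (fun i => (v i).coeff.support) with hA
    refine ⟨∑ a ∈ A, AddMonoidAlgebra.single a (fun i => (v i).coeff a), ?_⟩
    funext i
    ext a
    rw [piFwd_apply]
    have h1 : (∑ a' ∈ A, AddMonoidAlgebra.single a' (fun i => (v i).coeff a') : 
        AddMonoidAlgebra (Π i, S i) G).coeff a
        = ∑ a' ∈ A, (AddMonoidAlgebra.single a' (fun i => (v i).coeff a') :
            AddMonoidAlgebra (Π i, S i) G).coeff a := by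
        rw [AddMonoidAlgebra.coeff_sum]; exact Finsupp.finset_sum_apply A _ a
    rw [h1]
    simp only [AddMonoidAlgebra.coeff_single, Finsupp.single_apply]
    rw [Finset.sum_ite_eq' A a (fun a' => (fun i => (v i).coeff a'))]
    by_cases h : a ∈ A
    · simp [h]
    · have : (v i).coeff a = 0 := by
        by_contra hne
        exact h (Finset.le_sup (f := fun i => (v i).coeff.support) (Finset.mem_univ i)
          (Finsupp.mem_support_iff.mpr hne))
      simp [h, this]

/-- `(Π S i)[G] ≃ₐ[F] Π (S i)[G]`. -/
def piAlgEquiv : AddMonoidAlgebra (Π i, S i) G ≃ₐ[F] Π i, AddMonoidAlgebra (S i) G :=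
  AlgEquiv.ofBijective
    ⟨piFwd S G, fun z => by
      funext i
      show piFwd S G (AddMonoidAlgebra.single 0 _) i = _
      rw [piFwd_single]
      rfl⟩
    piFwd_bijective

end e4
end St16


open Polynomial

noncomputable section
namespace St16

variable {B : Type*} [CommRing B]

theorem cyclo_dvd_sub_C {p : ℕ} (hp : p.Prime) {i j : ℕ} (hij : i < j) :
    cyclotomic (p ^ i) B ∣ (cyclotomic (p ^ j) B - C (p : B)) := by
  obtain ⟨j', rfl⟩ : ∃ j', j = j' + 1 := ⟨j - 1, (Nat.succ_pred_eq_of_pos (Nat.pos_of_ne_zero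
    (by omega))).symm⟩
  have hij' : i ≤ j' := by omega
  -- cyclotomic (p^i) B ∣ X^(p^i) - 1 ∣ X^(p^j') - 1 ∣ each (X^(p^j'))^k - 1
  have h1 : cyclotomic (p ^ i) B ∣ (X : B[X]) ^ (p ^ i) - 1 :=
    cyclotomic.dvd_X_pow_sub_one _ _
  have h2 : ((X : B[X]) ^ (p ^ i) - 1) ∣ (X : B[X]) ^ (p ^ j') - 1 := by
    have : (X : B[X]) ^ (p ^ j') = ((X : B[X]) ^ (p ^ i)) ^ (p ^ (j' - i)) := by
      rw [← pow_mul, ← pow_add, Nat.add_sub_cancel' hij']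
    rw [this]
    have := sub_dvd_pow_sub_pow ((X : B[X]) ^ (p ^ i)) 1 (p ^ (j' - i))
    rwa [one_pow] at this
  have h3 : ((X : B[X]) ^ (p ^ j') - 1) ∣ (cyclotomic (p ^ (j' + 1)) B - C (p : B)) := by
    rw [cyclotomic_prime_pow_eq_geom_sum hp]
    have hC : (C ((p : B)) : B[X]) = ∑ _k ∈ Finset.range p, 1 := by
      simp [Finset.sum_const, Finset.card_range]
    rw [hC, ← Finset.sum_sub_distrib]
    apply Finset.dvd_sum
    intro k _
    have := sub_dvd_pow_sub_pow ((X : B[X]) ^ (p ^ j')) 1 k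
    rwa [one_pow] at this
  exact (h1.trans h2).trans h3

theorem cyclo_isCoprime {F : Type*} [Field F] [CharZero F] [Algebra F B]
    {p : ℕ} (hp : p.Prime) {i j : ℕ} (hij : i ≠ j) :
    IsCoprime (cyclotomic (p ^ i) B) (cyclotomic (p ^ j) B) := by
  -- wlog i < j
  have key : ∀ {i j : ℕ}, i < j →
      IsCoprime (cyclotomic (p ^ i) B) (cyclotomic (p ^ j) B) := by
    intro i j hij
    obtain ⟨q, hq⟩ := cyclo_dvd_sub_C (B := B) hp hij
    have hu : IsUnit ((C (p : B)) : B[X]) := by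
      have h1 : IsUnit ((p : F)) := isUnit_iff_ne_zero.mpr (by exact_mod_cast hp.ne_zero)
      have h2 : IsUnit ((p : B)) := by
        have := h1.map (algebraMap F B)
        rwa [map_natCast] at this
      exact h2.map C
    obtain ⟨w, hw⟩ := hu
    refine ⟨-(((w⁻¹ : B[X]ˣ) : B[X])) * q, ((w⁻¹ : B[X]ˣ) : B[X]), ?_⟩
    have hcyc : cyclotomic (p ^ j) B = cyclotomic (p ^ i) B * q + C (p : B) := by
      rw [← hq]; ring
    rw [hcyc, ← hw]
    have : ((w⁻¹ : B[X]ˣ) : B[X]) * (w : B[X]) = 1 := w.inv_mul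
    calc -(((w⁻¹ : B[X]ˣ) : B[X])) * q * cyclotomic (p ^ i) B +
          ((w⁻¹ : B[X]ˣ) : B[X]) * (cyclotomic (p ^ i) B * q + (w : B[X]))
        = ((w⁻¹ : B[X]ˣ) : B[X]) * (w : B[X]) := by ring
      _ = 1 := this
  rcases lt_or_gt_of_ne hij with h | h
  · exact key h
  · exact (key h).symm

theorem prod_cyclo_fin {p : ℕ} (hp : p.Prime) (a : ℕ) :
    ∏ i : Fin (a + 1), cyclotomic (p ^ (i : ℕ)) B = (X : B[X]) ^ (p ^ a) - 1 := by
  have h := prod_cyclotomic_eq_X_pow_sub_one (n := p ^ a) (pow_pos hp.pos a) B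
  rw [Nat.divisors_prime_pow hp, Finset.prod_map] at h
  rw [Fin.prod_univ_eq_prod_range (fun i => cyclotomic (p ^ i) B) (a + 1)]
  exact h

end St16


open Polynomial

noncomputable section
namespace St16

variable {F : Type*} [Field F]

section swap
variable (f g : F[X])

def swapBeta : AdjoinRoot g →+*
    AdjoinRoot (map (algebraMap F (AdjoinRoot f)) g) :=
  AdjoinRoot.lift (algebraMap F _) (AdjoinRoot.root _) (by
    have key : ((AdjoinRoot.of (map (algebraMap F (AdjoinRoot f)) g)).comp
        (algebraMap F (AdjoinRoot f))) =
        algebraMap F (AdjoinRoot (map (algebraMap F (AdjoinRoot f)) g)) := by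
      rw [← AdjoinRoot.algebraMap_eq]
      exact (IsScalarTower.algebraMap_eq F (AdjoinRoot f) _).symm
    rw [← key, ← eval₂_map]
    exact AdjoinRoot.eval₂_root _)

theorem swapBeta_root : swapBeta f g (AdjoinRoot.root g) = AdjoinRoot.root _ :=
  AdjoinRoot.lift_root _

theorem swapBeta_of (z : F) : swapBeta f g (algebraMap F (AdjoinRoot g) z) =
    algebraMap F (AdjoinRoot (map (algebraMap F (AdjoinRoot f)) g)) z :=
  AdjoinRoot.lift_of _

def swapHom : AdjoinRoot (map (algebraMap F (AdjoinRoot g)) f) →+*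
    AdjoinRoot (map (algebraMap F (AdjoinRoot f)) g) :=
  AdjoinRoot.lift (swapBeta f g)
    (algebraMap (AdjoinRoot f) _ (AdjoinRoot.root f)) (by
      rw [eval₂_map]
      have hβ : (swapBeta f g).comp (algebraMap F (AdjoinRoot g)) =
          algebraMap F (AdjoinRoot (map (algebraMap F (AdjoinRoot f)) g)) :=
        RingHom.ext fun z => swapBeta_of f g z
      rw [hβ]
      have key2 : (algebraMap F (AdjoinRoot (map (algebraMap F (AdjoinRoot f)) g))) =
          (algebraMap (AdjoinRoot f) _).comp (algebraMap F (AdjoinRoot f)) :=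
        IsScalarTower.algebraMap_eq F (AdjoinRoot f) _
      rw [key2, ← hom_eval₂]
      have hz : eval₂ (algebraMap F (AdjoinRoot f)) (AdjoinRoot.root f) f = 0 :=
        AdjoinRoot.eval₂_root f
      rw [hz, map_zero])

theorem swapHom_root : swapHom f g (AdjoinRoot.root _) =
    algebraMap (AdjoinRoot f) _ (AdjoinRoot.root f) :=
  AdjoinRoot.lift_root _

theorem swapHom_base (b : AdjoinRoot g) :
    swapHom f g (algebraMap (AdjoinRoot g) _ b) = swapBeta f g b :=
  AdjoinRoot.lift_of _

def swapAlgHom : AdjoinRoot (map (algebraMap F (AdjoinRoot g)) f) →ₐ[F]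
    AdjoinRoot (map (algebraMap F (AdjoinRoot f)) g) where
  toRingHom := swapHom f g
  commutes' := fun z => by
    show swapHom f g (algebraMap F _ z) = _
    rw [IsScalarTower.algebraMap_apply F (AdjoinRoot g)
      (AdjoinRoot (map (algebraMap F (AdjoinRoot g)) f)), swapHom_base, swapBeta_of]

theorem swapAlgHom_comp_id (x : AdjoinRoot (map (algebraMap F (AdjoinRoot f)) g)) :
    swapAlgHom f g (swapAlgHom g f x) = x := by
  have hbase : ∀ a : AdjoinRoot f,
      swapAlgHom f g (swapAlgHom g f (algebraMap (AdjoinRoot f) _ a)) =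
        algebraMap (AdjoinRoot f) _ a := by
    have hρ : ((swapAlgHom f g).comp (swapAlgHom g f)).comp
        (IsScalarTower.toAlgHom F (AdjoinRoot f)
          (AdjoinRoot (map (algebraMap F (AdjoinRoot f)) g))) =
        IsScalarTower.toAlgHom F (AdjoinRoot f)
          (AdjoinRoot (map (algebraMap F (AdjoinRoot f)) g)) := by
      apply AdjoinRoot.algHom_ext
      show swapAlgHom f g (swapAlgHom g f
        (algebraMap (AdjoinRoot f) _ (AdjoinRoot.root f))) = _
      have h1 : swapAlgHom g f (algebraMap (AdjoinRoot f) _ (AdjoinRoot.root f)) =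
          AdjoinRoot.root (map (algebraMap F (AdjoinRoot g)) f) := by
        show swapHom g f (algebraMap (AdjoinRoot f) _ (AdjoinRoot.root f)) = _
        rw [swapHom_base, swapBeta_root]
      rw [h1]
      show swapHom f g (AdjoinRoot.root _) = _
      rw [swapHom_root]
      rfl
    intro a
    exact DFunLike.congr_fun hρ a
  have hAlg : (⟨((swapAlgHom f g).comp (swapAlgHom g f)).toRingHom, hbase⟩ :
      AdjoinRoot (map (algebraMap F (AdjoinRoot f)) g) →ₐ[AdjoinRoot f]
        AdjoinRoot (map (algebraMap F (AdjoinRoot f)) g)) =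
      AlgHom.id (AdjoinRoot f) _ := by
    apply AdjoinRoot.algHom_ext
    show swapAlgHom f g (swapAlgHom g f (AdjoinRoot.root _)) = AdjoinRoot.root _
    have h1 : swapAlgHom g f (AdjoinRoot.root (map (algebraMap F (AdjoinRoot f)) g)) =
        algebraMap (AdjoinRoot g) _ (AdjoinRoot.root g) := by
      show swapHom g f _ = _
      exact swapHom_root g f
    rw [h1]
    show swapHom f g (algebraMap (AdjoinRoot g) _ (AdjoinRoot.root g)) = _
    rw [swapHom_base, swapBeta_root]
  exact DFunLike.congr_fun hAlg x

/-- Symmetry of iterated `AdjoinRoot`. -/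
def swapAlgEquiv : AdjoinRoot (map (algebraMap F (AdjoinRoot g)) f) ≃ₐ[F]
    AdjoinRoot (map (algebraMap F (AdjoinRoot f)) g) :=
  AlgEquiv.ofAlgHom (swapAlgHom f g) (swapAlgHom g f)
    (AlgHom.ext fun x => swapAlgHom_comp_id f g x)
    (AlgHom.ext fun x => swapAlgHom_comp_id g f x)

end swap
end St16


open Polynomial

noncomputable section
namespace St16

variable {F : Type*} [Field F] [CharZero F]

theorem fact_irred (p : ℕ) (hp : p.Prime) (c : ℕ) :
    Fact (Irreducible (cyclotomic (p ^ c) ℚ)) :=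
  ⟨cyclotomic.irreducible_rat (pow_pos hp.pos c)⟩

theorem primRoot_Q (p : ℕ) (hp : p.Prime) (c : ℕ) :
    haveI := fact_irred p hp c
    IsPrimitiveRoot (AdjoinRoot.root (cyclotomic (p ^ c) ℚ)) (p ^ c) := by
  haveI := fact_irred p hp c
  haveI : CharZero (AdjoinRoot (cyclotomic (p ^ c) ℚ)) :=
    charZero_of_injective_algebraMap
      (algebraMap ℚ (AdjoinRoot (cyclotomic (p ^ c) ℚ))).injective
  haveI : NeZero (((p ^ c : ℕ) : AdjoinRoot (cyclotomic (p ^ c) ℚ))) :=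
    ⟨Nat.cast_ne_zero.mpr (pow_pos hp.pos c).ne'⟩
  rw [← isRoot_cyclotomic_iff (R := AdjoinRoot (cyclotomic (p ^ c) ℚ))]
  rw [← map_cyclotomic (n := p ^ c) (algebraMap ℚ (AdjoinRoot (cyclotomic (p ^ c) ℚ))),
    IsRoot, eval_map]
  exact AdjoinRoot.eval₂_root _

/-- the canonical ring hom `ℚ(ζ_{p^c}) → F[x]/Φ_{p^c}`. -/
def psiHom (p c : ℕ) :
    AdjoinRoot (cyclotomic (p ^ c) ℚ) →+* AdjoinRoot (cyclotomic (p ^ c) F) :=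
  AdjoinRoot.lift
    ((algebraMap F (AdjoinRoot (cyclotomic (p ^ c) F))).comp (algebraMap ℚ F))
    (AdjoinRoot.root (cyclotomic (p ^ c) F))
    (by
      rw [← eval₂_map (algebraMap ℚ F)
        (algebraMap F (AdjoinRoot (cyclotomic (p ^ c) F)))
        (AdjoinRoot.root (cyclotomic (p ^ c) F)), map_cyclotomic]
      exact AdjoinRoot.eval₂_root _)

def splitEquiv (p : ℕ) (hp : p.Prime) (c d : ℕ) (hdc : d ≤ c) :
    AdjoinRoot (cyclotomic (p ^ d) (AdjoinRoot (cyclotomic (p ^ c) F))) ≃ₐ[F]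
      (Fin ((p ^ d).totient) → AdjoinRoot (cyclotomic (p ^ c) F)) := by
  haveI := fact_irred p hp c
  have hη : IsPrimitiveRoot ((AdjoinRoot.root (cyclotomic (p ^ c) ℚ)) ^ (p ^ (c - d)))
      (p ^ d) :=
    (primRoot_Q p hp c).pow (pow_pos hp.pos c) (by rw [← pow_add]; congr 1; omega)
  have hcyc : cyclotomic (p ^ d) (AdjoinRoot (cyclotomic (p ^ c) ℚ)) =
      ∏ μ ∈ primitiveRoots (p ^ d) (AdjoinRoot (cyclotomic (p ^ c) ℚ)), (X - C μ) :=
    cyclotomic_eq_prod_X_sub_primitiveRoots hη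
  have hfactor : cyclotomic (p ^ d) (AdjoinRoot (cyclotomic (p ^ c) F)) =
      ∏ i : {x // x ∈ primitiveRoots (p ^ d) (AdjoinRoot (cyclotomic (p ^ c) ℚ))},
        (X - C (psiHom (F := F) p c i.1)) := by
    rw [Finset.prod_coe_sort
      (primitiveRoots (p ^ d) (AdjoinRoot (cyclotomic (p ^ c) ℚ)))
      (fun μ => X - C (psiHom (F := F) p c μ))]
    rw [← map_cyclotomic (n := p ^ d) (psiHom (F := F) p c), hcyc, Polynomial.map_prod]
    apply Finset.prod_congr rfl
    intro μ _
    rw [Polynomial.map_sub, Polynomial.map_X, Polynomial.map_C]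
  have hpair : Pairwise (Function.onFun IsCoprime
      (fun i : {x // x ∈ primitiveRoots (p ^ d) (AdjoinRoot (cyclotomic (p ^ c) ℚ))} =>
        ((X : (AdjoinRoot (cyclotomic (p ^ c) F))[X]) - C (psiHom (F := F) p c i.1)))) := by
    intro i j hij
    have hne : (i.1 : AdjoinRoot (cyclotomic (p ^ c) ℚ)) ≠ j.1 := fun h => hij (Subtype.ext h)
    have hunit : IsUnit (psiHom (F := F) p c i.1 - psiHom (F := F) p c j.1) := by
      rw [← map_sub]
      exact (isUnit_iff_ne_zero.mpr (sub_ne_zero.mpr hne)).map (psiHom (F := F) p c)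
    exact isCoprime_X_sub_C_of_isUnit_sub hunit
  refine AlgEquiv.trans (AlgEquiv.trans
    (Ideal.quotientEquivAlgOfEq F
      (I := Ideal.span {cyclotomic (p ^ d) (AdjoinRoot (cyclotomic (p ^ c) F))})
      (J := Ideal.span {∏ i : {x // x ∈ primitiveRoots (p ^ d)
          (AdjoinRoot (cyclotomic (p ^ c) ℚ))},
        ((X : (AdjoinRoot (cyclotomic (p ^ c) F))[X]) - C (psiHom (F := F) p c i.1))})
      (by rw [hfactor]))
    (crtAlgEquiv _ hpair)) ?_
  refine AlgEquiv.trans (AlgEquiv.piCongrRight (fun i =>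
    AlgEquiv.restrictScalars F (Polynomial.quotientSpanXSubCAlgEquiv
      (psiHom (F := F) p c i.1)))) ?_
  have hcard : Fintype.card
      {x // x ∈ primitiveRoots (p ^ d) (AdjoinRoot (cyclotomic (p ^ c) ℚ))} =
      (p ^ d).totient := by
    rw [Fintype.card_coe]
    exact hη.card_primitiveRoots
  exact piCongrLeft'AlgEquiv (fun _ => AdjoinRoot (cyclotomic (p ^ c) F))
    ((Fintype.equivFin _).trans (finCongr hcard))

end St16


open Polynomial

noncomputable section
namespace St16

universe u
variable {F : Type u} [Field F] [CharZero F]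

/-- `A` is a finite product of `F[x]/Φ_{p^c}`'s. -/
def Good (F : Type u) [Field F] [CharZero F] (p : ℕ) (A : Type u) [Ring A] [Algebra F A] :
    Prop :=
  ∃ N : ℕ, 0 < N ∧ ∃ c : Fin N → ℕ,
    Nonempty (A ≃ₐ[F] ((j : Fin N) → AdjoinRoot (cyclotomic (p ^ c j) F)))

theorem good_congr {p : ℕ} {A A' : Type u} [Ring A] [Algebra F A] [Ring A'] [Algebra F A']
    (e : A ≃ₐ[F] A') (h : Good F p A') : Good F p A := by
  obtain ⟨N, hN, c, ⟨e'⟩⟩ := h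
  exact ⟨N, hN, c, ⟨e.trans e'⟩⟩

theorem good_of_pow {p : ℕ} {A : Type u} [Ring A] [Algebra F A] {m x : ℕ} (hm : 0 < m)
    (e : A ≃ₐ[F] (Fin m → AdjoinRoot (cyclotomic (p ^ x) F))) : Good F p A :=
  ⟨m, hm, fun _ => x, ⟨e⟩⟩

theorem good_pi {p : ℕ} {ι : Type} [Fintype ι] [Nonempty ι] (A : ι → Type u)
    [∀ i, CommRing (A i)] [∀ i, Algebra F (A i)] (h : ∀ i, Good F p (A i)) :
    Good F p (Π i, A i) := by
  have hc : ∀ i, ∃ N : ℕ, ∃ c : Fin N → ℕ, 0 < N ∧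
      Nonempty (A i ≃ₐ[F] ((j : Fin N) → AdjoinRoot (cyclotomic (p ^ c j) F))) := by
    intro i
    obtain ⟨N, hN, c, he⟩ := h i
    exact ⟨N, c, hN, he⟩
  choose N c hN hE using hc
  have es : ∀ i, A i ≃ₐ[F] ((j : Fin (N i)) → AdjoinRoot (cyclotomic (p ^ c i j) F)) :=
    fun i => (hE i).some
  haveI : Nonempty (Σ i, Fin (N i)) :=
    ⟨⟨Classical.arbitrary ι, ⟨0, hN (Classical.arbitrary ι)⟩⟩⟩
  set ε := Fintype.equivFin (Σ i, Fin (N i)) with hε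
  refine ⟨Fintype.card (Σ i, Fin (N i)), Fintype.card_pos,
    fun j => c (ε.symm j).1 (ε.symm j).2, ⟨?_⟩⟩
  refine AlgEquiv.trans (AlgEquiv.piCongrRight es) ?_
  refine AlgEquiv.trans
    ((piCurryAlgEquiv (fun i (j : Fin (N i)) =>
      AdjoinRoot (cyclotomic (p ^ c i j) F))).symm) ?_
  exact piCongrLeft'AlgEquiv
    (fun s : (Σ i, Fin (N i)) => AdjoinRoot (cyclotomic (p ^ c s.1 s.2) F)) ε

theorem good_component (p : ℕ) (hp : p.Prime) (c : ℕ) {a : ℕ} (ha : 0 < a) :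
    Good F p (AddMonoidAlgebra (AdjoinRoot (cyclotomic (p ^ c) F)) (ZMod (p ^ a))) := by
  haveI : NeZero (p ^ a) := ⟨(pow_pos hp.pos a).ne'⟩
  -- B[ZMod p^a] ≃ B[X]/(X^{p^a} - 1)
  have E1 : AddMonoidAlgebra (AdjoinRoot (cyclotomic (p ^ c) F)) (ZMod (p ^ a)) ≃ₐ[F]
      AdjoinRoot ((X : (AdjoinRoot (cyclotomic (p ^ c) F))[X]) ^ (p ^ a) - 1) :=
    AlgEquiv.restrictScalars F (zmodAlgEquiv (p ^ a))
  have hpair : Pairwise (Function.onFun IsCoprime fun i : Fin (a + 1) =>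
      cyclotomic (p ^ (i : ℕ)) (AdjoinRoot (cyclotomic (p ^ c) F))) := by
    intro i j hij
    exact cyclo_isCoprime (F := F) hp (fun h => hij (Fin.ext h))
  have E2 : AdjoinRoot ((X : (AdjoinRoot (cyclotomic (p ^ c) F))[X]) ^ (p ^ a) - 1) ≃ₐ[F]
      Π i : Fin (a + 1), (AdjoinRoot (cyclotomic (p ^ c) F))[X] ⧸
        Ideal.span {cyclotomic (p ^ (i : ℕ)) (AdjoinRoot (cyclotomic (p ^ c) F))} :=
    AlgEquiv.trans
      (Ideal.quotientEquivAlgOfEq F (by rw [prod_cyclo_fin hp a]))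
      (crtAlgEquiv _ hpair)
  refine good_congr (E1.trans E2) ?_
  haveI : Nonempty (Fin (a + 1)) := ⟨0⟩
  refine good_pi _ ?_
  intro i
  show Good F p (AdjoinRoot (cyclotomic (p ^ (i : ℕ)) (AdjoinRoot (cyclotomic (p ^ c) F))))
  rcases le_or_gt (i : ℕ) c with hle | hlt
  · exact good_of_pow (Nat.totient_pos.mpr (pow_pos hp.pos _)) (splitEquiv p hp c _ hle)
  · -- swap the two adjunctions
    have Ea : AdjoinRoot (cyclotomic (p ^ (i : ℕ)) (AdjoinRoot (cyclotomic (p ^ c) F)))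
        ≃ₐ[F] AdjoinRoot (map (algebraMap F (AdjoinRoot (cyclotomic (p ^ c) F)))
          (cyclotomic (p ^ (i : ℕ)) F)) :=
      Ideal.quotientEquivAlgOfEq F (by rw [map_cyclotomic])
    have Eb := swapAlgEquiv (cyclotomic (p ^ (i : ℕ)) F) (cyclotomic (p ^ c) F)
    have Ec : AdjoinRoot (map (algebraMap F (AdjoinRoot (cyclotomic (p ^ (i : ℕ)) F)))
        (cyclotomic (p ^ c) F)) ≃ₐ[F]
        AdjoinRoot (cyclotomic (p ^ c) (AdjoinRoot (cyclotomic (p ^ (i : ℕ)) F))) :=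
      Ideal.quotientEquivAlgOfEq F (by rw [map_cyclotomic])
    exact good_of_pow (Nat.totient_pos.mpr (pow_pos hp.pos _))
      (((Ea.trans Eb).trans Ec).trans (splitEquiv p hp _ c hlt.le))

end St16


open Polynomial

noncomputable section
namespace St16

universe u
variable {F : Type u} [Field F] [CharZero F]

def trivialGroupAlgEquiv (F : Type u) [Field F] (G : Type) [AddCommMonoid G]
    [Subsingleton G] : AddMonoidAlgebra F G ≃ₐ[F] F := by
  refine AlgEquiv.ofAlgHom (AddMonoidAlgebra.lift F F G 1) (Algebra.ofId F _)
    (AlgHom.ext fun x => ?_) ?_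
  · have h := ((AddMonoidAlgebra.lift F F G 1).comp (Algebra.ofId F _)).commutes x
    simpa using h
  · refine AddMonoidAlgebra.algHom_ext ?_ (Subsingleton.elim _ _)
    intro g
    have hg : g = 0 := Subsingleton.elim _ _
    subst hg
    rw [AlgHom.comp_apply, AddMonoidAlgebra.lift_single, one_smul]
    show (Algebra.ofId F _) ((1 : Multiplicative G →* F) (Multiplicative.ofAdd 0)) = _
    rw [MonoidHom.one_apply, map_one]
    rfl

theorem goodF (p : ℕ) : Good F p F := by
  have h : cyclotomic (p ^ 0) F = X - C 1 := by
    rw [pow_zero, cyclotomic_one, ← Polynomial.C_1]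
  have eR : AdjoinRoot (cyclotomic (p ^ 0) F) ≃ₐ[F] F :=
    (Ideal.quotientEquivAlgOfEq F (by rw [h])).trans
      (Polynomial.quotientSpanXSubCAlgEquiv (1 : F))
  exact good_of_pow one_pos (eR.symm.trans
    (funUniqueAlgEquiv F (AdjoinRoot (cyclotomic (p ^ 0) F)) (Fin 1)))

theorem good_groupAlgebra (p : ℕ) (hp : p.Prime) :
    ∀ (t : ℕ) (b : Fin t → ℕ), (∀ i, 0 < b i) →
      Good F p (AddMonoidAlgebra F ((i : Fin t) → ZMod (p ^ b i))) := by
  intro t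
  induction t with
  | zero =>
    intro b _
    exact good_congr (trivialGroupAlgEquiv F _) (goodF p)
  | succ t ih =>
    intro b hb
    have e1 : ((i : Fin (t + 1)) → ZMod (p ^ b i)) ≃+
        (ZMod (p ^ b 0) × ((i : Fin t) → ZMod (p ^ b i.succ))) :=
      { toEquiv := (Fin.consEquiv (fun i => ZMod (p ^ b i))).symm
        map_add' := fun _ _ => rfl }
    have E1 : AddMonoidAlgebra F ((i : Fin (t + 1)) → ZMod (p ^ b i)) ≃ₐ[F]
        AddMonoidAlgebra F (ZMod (p ^ b 0) × ((i : Fin t) → ZMod (p ^ b i.succ))) :=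
      AddMonoidAlgebra.domCongr F F e1
    have E2 := prodAlgEquiv (F := F) (B := F) (M := ZMod (p ^ b 0))
      (N := ((i : Fin t) → ZMod (p ^ b i.succ)))
    obtain ⟨N, hN, c, ⟨E⟩⟩ := ih (fun i => b i.succ) (fun i => hb i.succ)
    have E3 := mapCoeffAlgEquiv (F := F) (G := ZMod (p ^ b 0)) E
    have E4 := piAlgEquiv (F := F) (G := ZMod (p ^ b 0))
      (S := fun j : Fin N => AdjoinRoot (cyclotomic (p ^ c j) F))
    haveI : Nonempty (Fin N) := Fin.pos_iff_nonempty.mp hN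
    exact good_congr (((E1.trans E2).trans E3).trans E4)
      (good_pi _ (fun j => good_component p hp (c j) (hb 0)))

end St16



/-- the group algebra F[ℤ/p^{b_1}ℤ × ⋯ × ℤ/p^{b_t}ℤ] is
isomorphic as an F-algebra to a finite product of quotients
F[z]/⟨Φ_{p^{c_j}}(z)⟩. -/
theorem groupAlgebra_pGroup_equiv_pi_cyclotomic
    (F : Type*) [Field F] [CharZero F] (p : ℕ) (hp : p.Prime)
    (t : ℕ) (b : Fin t → ℕ) (hb : ∀ i, 0 < b i) :
    ∃ N : ℕ, 0 < N ∧ ∃ c : Fin N → ℕ,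
      Nonempty
        (AddMonoidAlgebra F ((i : Fin t) → ZMod (p ^ b i)) ≃ₐ[F]
          ((j : Fin N) → AdjoinRoot (cyclotomic (p ^ c j) F))) := by
  exact St16.good_groupAlgebra p hp t b hb
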